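/- Let λ₀, λ₁, c₀, c₁ > 0 with λ₀/c₀ ≠ λ₁/c₁, and a < b. Set μ = λ₀/c₀ − λ₁/c₁ and D = λ₀c₁·e^{μb} − λ₁c₀·e^{μa}, and assume D ≠ 0. The functions u₀(x) = (λ₀c₁·e^{μx} − λ₁c₀·e^{μa})/D and u₁(x) = (λ₁c₀·e^{μx} − λ₁c₀·e^{μa})/D satisfy u₀′(x) = −(λ₀/c₀)(u₁(x) − u₀(x)) and u₁′(x) = −(λ₁/c₁)(u₁(x) − u₀(x)) on [a,b], together with u₀(b) = 1 and u₁(a) = 0. -/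

import Mathlib

theorem stmt_9 (l0 l1 c0 c1 a b : ℝ) (hl0 : 0 < l0) (hl1 : 0 < l1) (hc0 : 0 < c0) (hc1 : 0 < c1)
    (hne : l0 / c0 ≠ l1 / c1) (hab : a < b)
    (mu D : ℝ) (hmu : mu = l0 / c0 - l1 / c1)
    (hD : D = l0 * c1 * Real.exp (mu * b) - l1 * c0 * Real.exp (mu * a)) (hD0 : D ≠ 0)
    (u0 u1 : ℝ → ℝ)
    (hu0 : u0 = fun x => (l0 * c1 * Real.exp (mu * x) - l1 * c0 * Real.exp (mu * a)) / D)
    (hu1 : u1 = fun x => (l1 * c0 * Real.exp (mu * x) - l1 * c0 * Real.exp (mu * a)) / D) :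
    (∀ x ∈ Set.Icc a b, HasDerivAt u0 (-(l0 / c0) * (u1 x - u0 x)) x) ∧
    (∀ x ∈ Set.Icc a b, HasDerivAt u1 (-(l1 / c1) * (u1 x - u0 x)) x) ∧
    u0 b = 1 ∧ u1 a = 0 := by
  have key : ∀ k x : ℝ, HasDerivAt
      (fun x => (k * Real.exp (mu * x) - l1 * c0 * Real.exp (mu * a)) / D)
      (k * mu * Real.exp (mu * x) / D) x := by
    intro k x
    have h1 : HasDerivAt (fun x : ℝ => mu * x) mu x := by
      simpa using (hasDerivAt_id x).const_mul mu
    have h2 : HasDerivAt (fun x : ℝ => Real.exp (mu * x)) (Real.exp (mu * x) * mu) x :=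
      (Real.hasDerivAt_exp _).comp x h1
    have h3 := ((h2.const_mul k).sub_const (l1 * c0 * Real.exp (mu * a))).div_const D
    exact h3.congr_deriv (by ring)
  have hc0' := hc0.ne'
  have hc1' := hc1.ne'
  refine ⟨?_, ?_, ?_, ?_⟩
  · intro x _
    have := key (l0 * c1) x
    rw [← hu0] at this
    convert this using 1
    rw [hu0, hu1, hmu]
    field_simp
    ring
  · intro x _
    have := key (l1 * c0) x
    rw [← hu1] at this
    convert this using 1
    rw [hu0, hu1, hmu]
    field_simp
    ring
  · rw [hu0]
    show (l0 * c1 * Real.exp (mu * b) - l1 * c0 * Real.exp (mu * a)) / D = 1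
    rw [← hD]; exact div_self hD0
  · simp [hu1]
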